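/- Let μ be a (nonnegative, Borel) measure on ℝ such that ∫ |x|^k dμ(x) < ∞ for every integer k ≥ 0, and set c_k = ∫ x^k dμ(x). Then for every m ≥ 1, det_{1≤i,j≤m}(c_{i+j−2}) = (1/m!) · ∫_{ℝ^m} Π_{1≤i<j≤m}(x_j − x_i)² dμ(x_1)⋯dμ(x_m). -/

import Mathlib

open MeasureTheory

/-- Heine's identity: `det(c_{i+j−2}) = (1/m!) ∫_{ℝ^m} Π_{i<j}(x_j − x_i)² dμ(x_1)⋯dμ(x_m)`,
where `c_k = ∫ x^k dμ(x)` are the moments of `μ`. -/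
theorem hankel_det_eq_integral (μ : Measure ℝ)
    (hμ : ∀ k : ℕ, Integrable (fun x : ℝ => |x| ^ k) μ) (m : ℕ) (hm : 1 ≤ m) :
    Matrix.det (Matrix.of fun i j : Fin m => ∫ x : ℝ, x ^ ((i : ℕ) + (j : ℕ)) ∂μ) =
      (1 / (Nat.factorial m : ℝ)) *
        ∫ y : Fin m → ℝ, (∏ i : Fin m, ∏ j ∈ Finset.Ioi i, (y j - y i)) ^ 2
          ∂(Measure.pi fun _ : Fin m => μ) := by
  classical
  haveI hfin : IsFiniteMeasure μ := by
    constructor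
    have h0 : Integrable (fun _ : ℝ => (1:ℝ)) μ := by simpa using hμ 0
    exact (by simpa [integrable_const_iff] using h0 : IsFiniteMeasure μ).measure_univ_lt_top
  have hmono : ∀ k : ℕ, Integrable (fun x : ℝ => x ^ k) μ := by
    intro k
    refine (hμ k).mono' ((measurable_id.pow_const k).aestronglyMeasurable) ?_
    filter_upwards with x
    simp [Real.norm_eq_abs, abs_pow]
  set c : ℕ → ℝ := fun k => ∫ x, x ^ k ∂μ with hc
  letI : MeasureSpace ℝ := ⟨μ⟩
  have hvol : (volume : Measure (Fin m → ℝ)) = Measure.pi fun _ => μ := volume_pi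
  have hprodInt : ∀ a : Fin m → ℕ,
      Integrable (fun y : Fin m → ℝ => ∏ i, y i ^ a i) (Measure.pi fun _ => μ) := by
    intro a
    rw [← hvol]
    exact Integrable.fintype_prod (f := fun i (x : ℝ) => x ^ a i) (fun i => hmono (a i))
  have hprodEq : ∀ a : Fin m → ℕ,
      ∫ y : Fin m → ℝ, ∏ i, y i ^ a i ∂(Measure.pi fun _ => μ) = ∏ i, c (a i) := by
    intro a
    rw [← hvol]
    exact integral_fintype_prod_eq_prod (ι := Fin m) (fun i (x : ℝ) => x ^ a i)
  have key : ∀ y : Fin m → ℝ,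
      (∏ i : Fin m, ∏ j ∈ Finset.Ioi i, (y j - y i)) ^ 2 =
        ∑ p : Equiv.Perm (Fin m) × Equiv.Perm (Fin m),
          (((Equiv.Perm.sign p.1 : ℤ) : ℝ) * ((Equiv.Perm.sign p.2 : ℤ) : ℝ)) *
            ∏ i, y i ^ (((p.1⁻¹ i : Fin m) : ℕ) + ((p.2⁻¹ i : Fin m) : ℕ)) := by
    intro y
    have hv : ∀ σ : Equiv.Perm (Fin m),
        ∏ i, y (σ i) ^ (i : ℕ) = ∏ i, y i ^ ((σ⁻¹ i : Fin m) : ℕ) := by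
      intro σ
      rw [← Equiv.prod_comp σ (fun j => y j ^ ((σ⁻¹ j : Fin m) : ℕ))]
      simp
    rw [← Matrix.det_vandermonde, sq, Matrix.det_apply, Finset.sum_mul_sum,
      Fintype.sum_prod_type]
    refine Finset.sum_congr rfl fun σ _ => Finset.sum_congr rfl fun τ _ => ?_
    simp only [Matrix.vandermonde_apply, Units.smul_def, zsmul_eq_mul, hv]
    rw [mul_mul_mul_comm, ← Finset.prod_mul_distrib]
    simp [pow_add]
  simp only [key]
  rw [integral_finset_sum _ fun p _ => (hprodInt _).const_mul _]
  simp only [integral_const_mul, hprodEq]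
  -- now the algebra
  have hdet : Matrix.det (Matrix.of fun i j : Fin m => ∫ x : ℝ, x ^ ((i : ℕ) + (j : ℕ)) ∂μ)
      = ∑ π : Equiv.Perm (Fin m), ((Equiv.Perm.sign π : ℤ) : ℝ) *
          ∏ i, c (((π i : Fin m) : ℕ) + (i : ℕ)) := by
    rw [Matrix.det_apply]
    refine Finset.sum_congr rfl fun π _ => ?_
    simp [Units.smul_def, zsmul_eq_mul, hc]
  have hS : (∑ p : Equiv.Perm (Fin m) × Equiv.Perm (Fin m),
        (((Equiv.Perm.sign p.1 : ℤ) : ℝ) * ((Equiv.Perm.sign p.2 : ℤ) : ℝ)) *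
          ∏ i, c (((p.1⁻¹ i : Fin m) : ℕ) + ((p.2⁻¹ i : Fin m) : ℕ)))
      = (Nat.factorial m : ℝ) * ∑ π : Equiv.Perm (Fin m), ((Equiv.Perm.sign π : ℤ) : ℝ) *
          ∏ i, c (((π i : Fin m) : ℕ) + (i : ℕ)) := by
    rw [Fintype.sum_prod_type]
    have hsum : ∀ σ τ : Equiv.Perm (Fin m),
        (((Equiv.Perm.sign σ : ℤ) : ℝ) * ((Equiv.Perm.sign τ : ℤ) : ℝ)) *
          ∏ i, c (((σ⁻¹ i : Fin m) : ℕ) + ((τ⁻¹ i : Fin m) : ℕ))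
        = (((Equiv.Perm.sign σ⁻¹ : ℤ) : ℝ) * ((Equiv.Perm.sign τ⁻¹ : ℤ) : ℝ)) *
          ∏ i, c (((σ⁻¹ i : Fin m) : ℕ) + ((τ⁻¹ i : Fin m) : ℕ)) := by
      intro σ τ; rw [Equiv.Perm.sign_inv, Equiv.Perm.sign_inv]
    calc
      ∑ σ : Equiv.Perm (Fin m), ∑ τ : Equiv.Perm (Fin m),
          (((Equiv.Perm.sign σ : ℤ) : ℝ) * ((Equiv.Perm.sign τ : ℤ) : ℝ)) *
            ∏ i, c (((σ⁻¹ i : Fin m) : ℕ) + ((τ⁻¹ i : Fin m) : ℕ))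
        = ∑ σ : Equiv.Perm (Fin m), ∑ τ : Equiv.Perm (Fin m),
          (((Equiv.Perm.sign σ : ℤ) : ℝ) * ((Equiv.Perm.sign τ : ℤ) : ℝ)) *
            ∏ i, c (((σ i : Fin m) : ℕ) + ((τ i : Fin m) : ℕ)) := by
          refine Fintype.sum_equiv (Equiv.inv _) _ _ fun σ => ?_
          refine Fintype.sum_equiv (Equiv.inv _) _ _ fun τ => ?_
          simp only [Equiv.inv_apply, hsum, inv_inv]
      _ = ∑ _τ : Equiv.Perm (Fin m), ∑ π : Equiv.Perm (Fin m),
            ((Equiv.Perm.sign π : ℤ) : ℝ) * ∏ i, c (((π i : Fin m) : ℕ) + (i : ℕ)) := by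
          rw [Finset.sum_comm]
          refine Finset.sum_congr rfl fun τ _ => ?_
          refine Fintype.sum_equiv (Equiv.mulRight τ⁻¹) _ _ fun σ => ?_
          have hp : ∏ i, c (((σ i : Fin m) : ℕ) + ((τ i : Fin m) : ℕ))
              = ∏ i, c ((((σ * τ⁻¹) i : Fin m) : ℕ) + (i : ℕ)) := by
            rw [← Equiv.prod_comp τ (fun i => c ((((σ * τ⁻¹) i : Fin m) : ℕ) + (i : ℕ)))]
            simp [Equiv.Perm.mul_apply]
          rw [hp]
          simp only [Equiv.coe_mulRight]
          congr 1
          have : (Equiv.Perm.sign (σ * τ⁻¹) : ℤ) = (Equiv.Perm.sign σ : ℤ) * (Equiv.Perm.sign τ : ℤ) := by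
            simp [Equiv.Perm.sign_mul, Units.val_mul]
          rw [this]
          push_cast
          have h2 : ((Equiv.Perm.sign τ : ℤ) : ℝ) * ((Equiv.Perm.sign τ : ℤ) : ℝ) = 1 := by
            have h := Int.units_mul_self (Equiv.Perm.sign τ)
            have h' : ((Equiv.Perm.sign τ : ℤ) * (Equiv.Perm.sign τ : ℤ)) = 1 := by
              rw [← Units.val_mul, h, Units.val_one]
            rw [← Int.cast_mul, h', Int.cast_one]
          nlinarith [h2]
      _ = (Nat.factorial m : ℝ) * ∑ π : Equiv.Perm (Fin m), ((Equiv.Perm.sign π : ℤ) : ℝ) *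
            ∏ i, c (((π i : Fin m) : ℕ) + (i : ℕ)) := by
          rw [Finset.sum_const, Finset.card_univ, Fintype.card_perm, Fintype.card_fin,
            nsmul_eq_mul]
  rw [hdet, ← hdet, hS, hdet, one_div, inv_mul_cancel_left₀]
  exact_mod_cast Nat.factorial_ne_zero m
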